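/- Fix m, p, L, N ∈ ℕ, a data pair (u_d, y_d) of length T, an initial pair (u_ini, y_ini) of length T_ini, and a future input u_f : {0,…,T_f−1} → ℝ^m with T_f ≥ 1. If (u_d, y_d) is informative for unique prediction of u_f from (u_ini, y_ini), then T_ini ≥ ℓ(C',A') for every explaining system (n', A', B', C', D'). -/

import Mathlib

/-- `(u, y)` is a trajectory of length `T` of the linear system `(A, B, C, D)`. -/
def IsTraj {n m p : ℕ} (A : Matrix (Fin n) (Fin n) ℝ) (B : Matrix (Fin n) (Fin m) ℝ)
    (C : Matrix (Fin p) (Fin n) ℝ) (D : Matrix (Fin p) (Fin m) ℝ)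
    (T : ℕ) (u : Fin T → Fin m → ℝ) (y : Fin T → Fin p → ℝ) : Prop :=
  ∃ x : Fin (T + 1) → Fin n → ℝ,
    ∀ t : Fin T,
      x t.succ = A.mulVec (x t.castSucc) + B.mulVec (u t) ∧
      y t = C.mulVec (x t.castSucc) + D.mulVec (u t)

/-- Observability matrix of depth `k` of the pair `(C, A)`. -/
noncomputable def obsMat {n p : ℕ} (A : Matrix (Fin n) (Fin n) ℝ)
    (C : Matrix (Fin p) (Fin n) ℝ) (k : ℕ) : Matrix (Fin k × Fin p) (Fin n) ℝ :=
  fun ir j => (C * A ^ (ir.1 : ℕ)) ir.2 j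

/-- The lag of the pair `(C, A)`: the least `k` with `rank O_k = rank O_{k+1}`. -/
noncomputable def lag {n p : ℕ} (A : Matrix (Fin n) (Fin n) ℝ)
    (C : Matrix (Fin p) (Fin n) ℝ) : ℕ :=
  sInf {k | (obsMat A C k).rank = (obsMat A C (k + 1)).rank}

/-- `(n', A', B', C', D')` is an explaining system for the data `(ud, yd)` and the
initial trajectory `(uini, yini)`, within the model class of order at most `N` and
lag at most `L`. -/
def Explaining {m p : ℕ} (L N T Tini : ℕ)
    (ud : Fin T → Fin m → ℝ) (yd : Fin T → Fin p → ℝ)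
    (uini : Fin Tini → Fin m → ℝ) (yini : Fin Tini → Fin p → ℝ)
    {n' : ℕ} (A' : Matrix (Fin n') (Fin n') ℝ) (B' : Matrix (Fin n') (Fin m) ℝ)
    (C' : Matrix (Fin p) (Fin n') ℝ) (D' : Matrix (Fin p) (Fin m) ℝ) : Prop :=
  n' ≤ N ∧ lag A' C' ≤ L ∧ IsTraj A' B' C' D' T ud yd ∧ IsTraj A' B' C' D' Tini uini yini

/-- The data `(ud, yd)` is informative for unique prediction of `uf` from
`(uini, yini)`: (i) every explaining system has exactly one response `yf` to `uf`
extending `(uini, yini)`, and (ii) some `yf` works for all explaining systems. -/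
def Informative {m p : ℕ} (L N T Tini Tf : ℕ)
    (ud : Fin T → Fin m → ℝ) (yd : Fin T → Fin p → ℝ)
    (uini : Fin Tini → Fin m → ℝ) (yini : Fin Tini → Fin p → ℝ)
    (uf : Fin Tf → Fin m → ℝ) : Prop :=
  (∀ (n' : ℕ) (A' : Matrix (Fin n') (Fin n') ℝ) (B' : Matrix (Fin n') (Fin m) ℝ)
      (C' : Matrix (Fin p) (Fin n') ℝ) (D' : Matrix (Fin p) (Fin m) ℝ),
      Explaining L N T Tini ud yd uini yini A' B' C' D' →
      ∃! yf : Fin Tf → Fin p → ℝ,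
        IsTraj A' B' C' D' (Tini + Tf) (Fin.append uini uf) (Fin.append yini yf)) ∧
  (∃ yf : Fin Tf → Fin p → ℝ,
      ∀ (n' : ℕ) (A' : Matrix (Fin n') (Fin n') ℝ) (B' : Matrix (Fin n') (Fin m) ℝ)
        (C' : Matrix (Fin p) (Fin n') ℝ) (D' : Matrix (Fin p) (Fin m) ℝ),
        Explaining L N T Tini ud yd uini yini A' B' C' D' →
        IsTraj A' B' C' D' (Tini + Tf) (Fin.append uini uf) (Fin.append yini yf))

namespace TiniAux

variable {n m p : ℕ}

/-- The state solution of the recursion `x(t+1) = A x(t) + B u(t)` from `x0`. -/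
noncomputable def sol (A : Matrix (Fin n) (Fin n) ℝ) (B : Matrix (Fin n) (Fin m) ℝ)
    (x0 : Fin n → ℝ) (u : ℕ → Fin m → ℝ) : ℕ → Fin n → ℝ
  | 0 => x0
  | t + 1 => A.mulVec (sol A B x0 u t) + B.mulVec (u t)

lemma sol_add (A : Matrix (Fin n) (Fin n) ℝ) (B : Matrix (Fin n) (Fin m) ℝ)
    (x0 z : Fin n → ℝ) (u : ℕ → Fin m → ℝ) :
    ∀ t, sol A B (x0 + z) u t = sol A B x0 u t + (A ^ t).mulVec z := by
  intro t
  induction t with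
  | zero => simp [sol]
  | succ t ih =>
      simp only [sol, ih, Matrix.mulVec_add, pow_succ']
      rw [← Matrix.mulVec_mulVec]
      abel

lemma obs_mulVec_eq_zero_iff (A : Matrix (Fin n) (Fin n) ℝ) (C : Matrix (Fin p) (Fin n) ℝ)
    (k : ℕ) (z : Fin n → ℝ) :
    (obsMat A C k).mulVec z = 0 ↔ ∀ i : Fin k, (C * A ^ (i : ℕ)).mulVec z = 0 := by
  constructor
  · intro h i
    funext r
    have := congrFun h (i, r)
    exact this
  · intro h
    funext ir
    have := congrFun (h ir.1) ir.2
    exact this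

lemma isTraj_sol (A : Matrix (Fin n) (Fin n) ℝ) (B : Matrix (Fin n) (Fin m) ℝ)
    (C : Matrix (Fin p) (Fin n) ℝ) (D : Matrix (Fin p) (Fin m) ℝ)
    (T : ℕ) (u : Fin T → Fin m → ℝ) (x0 : Fin n → ℝ) (ubar : ℕ → Fin m → ℝ)
    (hub : ∀ t : Fin T, ubar (t : ℕ) = u t) :
    IsTraj A B C D T u
      (fun t => C.mulVec (sol A B x0 ubar (t : ℕ)) + D.mulVec (u t)) := by
  refine ⟨fun t => sol A B x0 ubar (t : ℕ), fun t => ⟨?_, ?_⟩⟩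
  · show sol A B x0 ubar ((t : ℕ) + 1) = _
    simp [sol, hub t, Fin.coe_castSucc]
  · simp [Fin.coe_castSucc]

end TiniAux

/-- If the data is informative for unique prediction, then `Tini` is at least the lag of
every explaining system. -/
theorem Tini_ge_lag_of_informative {m p : ℕ} (L N T Tini Tf : ℕ) (hTf : 1 ≤ Tf)
    (ud : Fin T → Fin m → ℝ) (yd : Fin T → Fin p → ℝ)
    (uini : Fin Tini → Fin m → ℝ) (yini : Fin Tini → Fin p → ℝ)
    (uf : Fin Tf → Fin m → ℝ)
    (h : Informative L N T Tini Tf ud yd uini yini uf) :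
    ∀ (n' : ℕ) (A' : Matrix (Fin n') (Fin n') ℝ) (B' : Matrix (Fin n') (Fin m) ℝ)
      (C' : Matrix (Fin p) (Fin n') ℝ) (D' : Matrix (Fin p) (Fin m) ℝ),
      Explaining L N T Tini ud yd uini yini A' B' C' D' → lag A' C' ≤ Tini := by
  intro n' A' B' C' D' hexp
  open TiniAux in
  -- Key step: the kernel of `O_Tini` is contained in the kernel of `O_{Tini+1}`.
  have hk : ∀ z : Fin n' → ℝ, (obsMat A' C' Tini).mulVec z = 0 →
      (C' * A' ^ Tini).mulVec z = 0 := by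
    intro z hz0
    by_contra hz
    obtain ⟨huniq, -⟩ := h
    obtain ⟨hN, hL, hdata, hini⟩ := hexp
    obtain ⟨x, hx⟩ := hini
    -- the extended input sequence (as a function on ℕ)
    set ue : ℕ → Fin m → ℝ :=
      fun t => if ht : t < Tini + Tf then Fin.append uini uf ⟨t, ht⟩ else 0 with hue
    have hue_fin : ∀ t : Fin (Tini + Tf), ue (t : ℕ) = Fin.append uini uf t := by
      intro t; simp [hue, t.isLt]
    have hue_ini : ∀ t : Fin Tini, ue (t : ℕ) = uini t := by
      intro t
      have h1 : (⟨(t : ℕ), by omega⟩ : Fin (Tini + Tf)) = Fin.castAdd Tf t := rfl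
      simp [hue, show (t : ℕ) < Tini + Tf by omega, h1, Fin.append_left]
    have hue_f : ∀ s : Fin Tf, ue (Tini + (s : ℕ)) = uf s := by
      intro s
      have h1 : (⟨Tini + (s : ℕ), by omega⟩ : Fin (Tini + Tf)) = Fin.natAdd Tini s := rfl
      simp [hue, show Tini + (s : ℕ) < Tini + Tf by omega, h1, Fin.append_right]
    -- the state solution from `x 0` reproduces `x`
    have hsol : ∀ t : ℕ, (ht : t ≤ Tini) → sol A' B' (x 0) ue t = x ⟨t, by omega⟩ := by
      intro t
      induction t with
      | zero => intro _; rfl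
      | succ t ih =>
          intro ht
          have ht' : t < Tini := by omega
          have h1 := (hx ⟨t, ht'⟩).1
          have h2 : ((⟨t, ht'⟩ : Fin Tini).castSucc : Fin (Tini + 1)) = ⟨t, by omega⟩ := rfl
          have h3 : ((⟨t, ht'⟩ : Fin Tini).succ : Fin (Tini + 1)) = ⟨t + 1, by omega⟩ := rfl
          rw [h2, h3] at h1
          show A'.mulVec (sol A' B' (x 0) ue t) + B'.mulVec (ue t) = _
          rw [ih (by omega), hue_ini ⟨t, ht'⟩, ← h1]
    -- two candidate futures
    set x0b : Fin n' → ℝ := x 0 + z with hx0b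
    set yf1 : Fin Tf → Fin p → ℝ :=
      fun s => C'.mulVec (sol A' B' (x 0) ue (Tini + (s : ℕ))) + D'.mulVec (uf s) with hyf1
    set yf2 : Fin Tf → Fin p → ℝ :=
      fun s => C'.mulVec (sol A' B' x0b ue (Tini + (s : ℕ))) + D'.mulVec (uf s) with hyf2
    have hzero : ∀ j : Fin Tini, C'.mulVec ((A' ^ (j : ℕ)).mulVec z) = 0 := by
      intro j
      have := (obs_mulVec_eq_zero_iff A' C' Tini z).mp hz0 j
      rwa [← Matrix.mulVec_mulVec] at this
    -- trajectory 1
    have htraj1 : IsTraj A' B' C' D' (Tini + Tf) (Fin.append uini uf) (Fin.append yini yf1) := by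
      have := isTraj_sol A' B' C' D' (Tini + Tf) (Fin.append uini uf) (x 0) ue hue_fin
      have heq : Fin.append yini yf1 =
          fun t : Fin (Tini + Tf) => C'.mulVec (sol A' B' (x 0) ue (t : ℕ)) +
            D'.mulVec (Fin.append uini uf t) := by
        funext t
        refine Fin.addCases (fun j => ?_) (fun j => ?_) t
        · rw [Fin.append_left, Fin.append_left]
          have h1 : ((Fin.castAdd Tf j : Fin (Tini + Tf)) : ℕ) = (j : ℕ) := rfl
          rw [h1, hsol (j : ℕ) (by omega)]
          have h2 := (hx j).2
          have h3 : (j.castSucc : Fin (Tini + 1)) = ⟨(j : ℕ), by omega⟩ := rfl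
          rw [h3] at h2
          exact h2
        · rw [Fin.append_right, Fin.append_right]
          rfl
      rw [heq]; exact this
    -- trajectory 2
    have htraj2 : IsTraj A' B' C' D' (Tini + Tf) (Fin.append uini uf) (Fin.append yini yf2) := by
      have := isTraj_sol A' B' C' D' (Tini + Tf) (Fin.append uini uf) x0b ue hue_fin
      have heq : Fin.append yini yf2 =
          fun t : Fin (Tini + Tf) => C'.mulVec (sol A' B' x0b ue (t : ℕ)) +
            D'.mulVec (Fin.append uini uf t) := by
        funext t
        refine Fin.addCases (fun j => ?_) (fun j => ?_) t
        · rw [Fin.append_left, Fin.append_left]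
          have h1 : ((Fin.castAdd Tf j : Fin (Tini + Tf)) : ℕ) = (j : ℕ) := rfl
          rw [h1, hx0b, sol_add, Matrix.mulVec_add, hzero j, hsol (j : ℕ) (by omega)]
          have h2 := (hx j).2
          have h3 : (j.castSucc : Fin (Tini + 1)) = ⟨(j : ℕ), by omega⟩ := rfl
          rw [h3] at h2
          rw [add_zero]
          exact h2
        · rw [Fin.append_right, Fin.append_right]
          rfl
      rw [heq]; exact this
    -- uniqueness forces yf1 = yf2
    obtain ⟨yf, -, hun⟩ := huniq n' A' B' C' D' ⟨hN, hL, hdata, ⟨x, hx⟩⟩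
    have h12 : yf1 = yf2 := by rw [hun yf1 htraj1, hun yf2 htraj2]
    have h0 := congrFun h12 ⟨0, hTf⟩
    rw [hyf1, hyf2] at h0
    simp only [hx0b, sol_add] at h0
    apply hz
    rw [← Matrix.mulVec_mulVec]
    rw [Matrix.mulVec_add] at h0
    have h1 := add_right_cancel h0
    have h2 := left_eq_add.mp h1
    simpa using h2
  -- kernel equality
  have hker : LinearMap.ker (obsMat A' C' (Tini + 1)).mulVecLin =
      LinearMap.ker (obsMat A' C' Tini).mulVecLin := by
    ext z
    simp only [LinearMap.mem_ker, Matrix.mulVecLin_apply,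
      TiniAux.obs_mulVec_eq_zero_iff]
    constructor
    · intro hh i
      have := hh (Fin.castSucc i)
      simpa using this
    · intro hh i
      rcases lt_or_eq_of_le (Nat.lt_succ_iff.mp i.isLt) with hlt | heq
      · exact hh ⟨(i : ℕ), hlt⟩
      · rw [heq]
        exact hk z ((TiniAux.obs_mulVec_eq_zero_iff A' C' Tini z).mpr hh)
  -- rank equality via rank-nullity
  have hmem : Tini ∈ {k | (obsMat A' C' k).rank = (obsMat A' C' (k + 1)).rank} := by
    have h1 := LinearMap.finrank_range_add_finrank_ker (obsMat A' C' Tini).mulVecLin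
    have h2 := LinearMap.finrank_range_add_finrank_ker (obsMat A' C' (Tini + 1)).mulVecLin
    rw [hker] at h2
    show (obsMat A' C' Tini).rank = (obsMat A' C' (Tini + 1)).rank
    rw [Matrix.rank, Matrix.rank]
    omega
  exact Nat.sInf_le hmem
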